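/- Let c : Fin r → ℝ with ρ² := ∑_{i < r} (c i)² > 0, let σ > 0, and set h = σ²/ρ². Define the predictive risk p(α) = ∑_{i < r} (α² / ((s i)² + α)²) (c i)² + σ² ∑_{i < r} (s i)⁴ / ((s i)² + α)². If α* ∈ (0, (s 0)²/2) is a minimizer of T_h over [0, (s 0)²/2] and α* ≤ (s 0)^(4/3) · (min_{i < r} s i)^(2/3), then deriv p α* ≥ 0. -/

import Mathlib

/-- The PRO function `T_h(α) = f₁(α) + h·f₂(α)` for Tikhonov regularization. -/
noncomputable def proT (r : ℕ) (hr : 0 < r) (s : Fin r → ℝ) (h : ℝ) (α : ℝ) : ℝ :=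
  α ^ 2 / (α + (s ⟨0, hr⟩) ^ 2) ^ 2 + h * ∑ i, (s i) ^ 4 / (α + (s i) ^ 2) ^ 2

lemma aux_deriv1 (x a : ℝ) (hx : (0:ℝ) < x^2 + a) :
    HasDerivAt (fun α : ℝ => α^2/(α + x^2)^2) (2*a*x^2/(x^2+a)^3) a := by
  have hne : a + x^2 ≠ 0 := by rw [add_comm]; exact hx.ne'
  have hne' : x^2 + a ≠ 0 := hx.ne'
  have hu : HasDerivAt (fun α:ℝ => α^2) (2*a) a := by simpa using hasDerivAt_pow 2 a
  have hv : HasDerivAt (fun α:ℝ => (α + x^2)^2) (2*(a+x^2)) a := by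
    have := ((hasDerivAt_id a).add_const (x^2)).fun_pow 2
    simpa using this
  have := hu.fun_div hv (pow_ne_zero 2 hne)
  refine this.congr_deriv ?_
  field_simp
  ring

lemma aux_deriv1' (x a : ℝ) (hx : (0:ℝ) < x^2 + a) :
    HasDerivAt (fun α : ℝ => α^2/(x^2 + α)^2) (2*a*x^2/(x^2+a)^3) a := by
  have := aux_deriv1 x a hx
  simpa [add_comm] using this

lemma aux_deriv2 (u x a : ℝ) (hx : (0:ℝ) < x^2 + a) :
    HasDerivAt (fun α : ℝ => u/(α + x^2)^2) (-(2*u/(x^2+a)^3)) a := by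
  have hne : a + x^2 ≠ 0 := by rw [add_comm]; exact hx.ne'
  have hne' : x^2 + a ≠ 0 := hx.ne'
  have hv : HasDerivAt (fun α:ℝ => (α + x^2)^2) (2*(a+x^2)) a := by
    have := ((hasDerivAt_id a).add_const (x^2)).fun_pow 2
    simpa using this
  have := (hasDerivAt_const a u).fun_div hv (pow_ne_zero 2 hne)
  refine this.congr_deriv ?_
  field_simp
  ring

lemma aux_deriv2' (u x a : ℝ) (hx : (0:ℝ) < x^2 + a) :
    HasDerivAt (fun α : ℝ => u/(x^2 + α)^2) (-(2*u/(x^2+a)^3)) a := by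
  have := aux_deriv2 u x a hx
  simpa [add_comm] using this

lemma aux_key (x y a : ℝ) (hx : 0 < x) (hxy : x ≤ y) (ha : 0 < a) (hcube : a^3 ≤ x*y^2) :
    y/(y+a)^3 ≤ x/(x+a)^3 := by
  have hy : 0 < y := lt_of_lt_of_le hx hxy
  rw [div_le_div_iff₀ (by positivity) (by positivity)]
  have key : 0 ≤ (y - x) * (x*y*(x+y) + 3*a*x*y - a^3) := by
    apply mul_nonneg (by linarith)
    nlinarith [mul_pos (mul_pos hx hy) hy, mul_pos (mul_pos ha hx) hy,
      mul_pos (mul_pos hx hx) hy]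
  nlinarith [key]

/-- Let `ρ² = ∑ (c i)² > 0`, `σ > 0`, `h = σ²/ρ²` and let `p` be the
predictive risk. If `α* ∈ (0, (s 0)²/2)` is a minimizer of `T_h` over `[0, (s 0)²/2]`
with `α* ≤ (s 0)^{4/3} (minᵢ s i)^{2/3}`, then `deriv p α* ≥ 0`. -/
theorem predictive_risk_deriv_nonneg_at_proT_minimizer
    (r : ℕ) (hr : 0 < r) (s : Fin r → ℝ)
    (hpos : ∀ i, 0 < s i) (hmax : ∀ i, s i ≤ s ⟨0, hr⟩)
    (c : Fin r → ℝ) (hc : 0 < ∑ i, (c i) ^ 2)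
    (σ : ℝ) (hσ : 0 < σ)
    (h : ℝ) (hh : h = σ ^ 2 / ∑ i, (c i) ^ 2)
    (p : ℝ → ℝ)
    (hp : ∀ α : ℝ, p α = ∑ i, (α ^ 2 / ((s i) ^ 2 + α) ^ 2) * (c i) ^ 2
        + σ ^ 2 * ∑ i, (s i) ^ 4 / ((s i) ^ 2 + α) ^ 2)
    (a : ℝ) (ha : a ∈ Set.Ioo (0 : ℝ) ((s ⟨0, hr⟩) ^ 2 / 2))
    (hamin : IsMinOn (proT r hr s h) (Set.Icc 0 ((s ⟨0, hr⟩) ^ 2 / 2)) a)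
    (hbound : a ≤ (s ⟨0, hr⟩) ^ ((4 : ℝ) / 3) *
      (Finset.univ.inf' ⟨⟨0, hr⟩, Finset.mem_univ _⟩ s) ^ ((2 : ℝ) / 3)) :
    0 ≤ deriv p a := by
  obtain ⟨ha0, ha1⟩ := ha
  set i0 : Fin r := ⟨0, hr⟩ with hi0
  have hs1 : 0 < s i0 := hpos i0
  have hd : ∀ i : Fin r, (0:ℝ) < (s i)^2 + a := fun i => by positivity
  -- derivative of p at a
  have hpfun : p = fun α => ∑ i, (α ^ 2 / ((s i) ^ 2 + α) ^ 2) * (c i) ^ 2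
      + σ ^ 2 * ∑ i, (s i) ^ 4 / ((s i) ^ 2 + α) ^ 2 := funext hp
  have hderivp : HasDerivAt p
      (∑ i, 2*a*(s i)^2/((s i)^2+a)^3 * (c i)^2
        + σ^2 * ∑ i, -(2*((s i)^4)/((s i)^2+a)^3)) a := by
    rw [hpfun]
    refine HasDerivAt.add ?_ (HasDerivAt.const_mul _ (HasDerivAt.fun_sum fun i _ => ?_))
    · exact HasDerivAt.fun_sum fun i _ => (aux_deriv1' (s i) a (hd i)).mul_const _
    · exact aux_deriv2' ((s i)^4) (s i) a (hd i)
  -- derivative of proT at a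
  have hderivT : HasDerivAt (proT r hr s h)
      (2*a*(s i0)^2/((s i0)^2+a)^3 + h * ∑ i, -(2*((s i)^4)/((s i)^2+a)^3)) a := by
    have e : proT r hr s h
        = fun α => α ^ 2 / (α + (s i0) ^ 2) ^ 2 + h * ∑ i, (s i) ^ 4 / (α + (s i) ^ 2) ^ 2 := rfl
    rw [e]
    exact (aux_deriv1 (s i0) a (hd i0)).add
      (HasDerivAt.const_mul _ (HasDerivAt.fun_sum fun i _ => aux_deriv2 ((s i)^4) (s i) a (hd i)))
  -- first-order condition at the interior minimizer
  have hmem : Set.Icc (0:ℝ) ((s i0)^2/2) ∈ nhds a := Icc_mem_nhds ha0 ha1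
  have hloc : IsLocalMin (proT r hr s h) a := hamin.isLocalMin hmem
  have hT0 := hloc.hasDerivAt_eq_zero hderivT
  set S3 : ℝ := ∑ i, (s i)^4/((s i)^2+a)^3 with hS3
  have hsum : ∑ i, -(2*((s i)^4)/((s i)^2+a)^3) = -(2 * S3) := by
    rw [hS3, Finset.mul_sum, ← Finset.sum_neg_distrib]
    exact Finset.sum_congr rfl fun i _ => by rw [mul_div_assoc]
  rw [hsum] at hT0
  have hbal : h * S3 = a*(s i0)^2/((s i0)^2+a)^3 := by linear_combination (-1/2 : ℝ) * hT0
  have hσ2 : σ^2 = h * (∑ i, (c i)^2) := by rw [hh]; field_simp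
  -- rewrite the noise term using the first-order condition
  have hnoise : σ^2 * (∑ i, -(2*((s i)^4)/((s i)^2+a)^3))
      = -(2 * ∑ i, (c i)^2 * (a*(s i0)^2/((s i0)^2+a)^3)) := by
    rw [hsum, hσ2, ← Finset.sum_mul]
    linear_combination (-2*(∑ i, (c i)^2)) * hbal
  rw [hderivp.deriv, hnoise, Finset.mul_sum, ← Finset.sum_neg_distrib,
    ← Finset.sum_add_distrib]
  apply Finset.sum_nonneg
  intro i _
  -- the cube bound a³ ≤ sᵢ² (s₀²)²
  have hmle : Finset.univ.inf' ⟨i0, Finset.mem_univ _⟩ s ≤ s i :=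
    Finset.inf'_le _ (Finset.mem_univ i)
  have hm0 : (0:ℝ) < Finset.univ.inf' ⟨i0, Finset.mem_univ _⟩ s := by
    exact (Finset.lt_inf'_iff _).2 fun i _ => hpos i
  have hai : a ≤ (s i0) ^ ((4:ℝ)/3) * (s i) ^ ((2:ℝ)/3) := by
    refine le_trans hbound ?_
    have := Real.rpow_le_rpow hm0.le hmle (by norm_num : (0:ℝ) ≤ 2/3)
    exact mul_le_mul_of_nonneg_left this (Real.rpow_nonneg hs1.le _)
  have hcube : a^3 ≤ (s i)^2 * ((s i0)^2)^2 := by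
    have h3 : a^3 ≤ ((s i0) ^ ((4:ℝ)/3) * (s i) ^ ((2:ℝ)/3))^3 :=
      pow_le_pow_left₀ ha0.le hai 3
    have e1 : ((s i0) ^ ((4:ℝ)/3)) ^ (3:ℕ) = (s i0) ^ (4:ℕ) := by
      rw [← Real.rpow_natCast ((s i0) ^ ((4:ℝ)/3)) 3, ← Real.rpow_mul hs1.le,
        ← Real.rpow_natCast (s i0) 4]
      norm_num
    have e2 : ((s i) ^ ((2:ℝ)/3)) ^ (3:ℕ) = (s i) ^ (2:ℕ) := by
      rw [← Real.rpow_natCast ((s i) ^ ((2:ℝ)/3)) 3, ← Real.rpow_mul (hpos i).le,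
        ← Real.rpow_natCast (s i) 2]
      norm_num
    calc a^3 ≤ ((s i0) ^ ((4:ℝ)/3) * (s i) ^ ((2:ℝ)/3))^3 := h3
      _ = (s i)^2 * ((s i0)^2)^2 := by rw [mul_pow, e1, e2]; ring
  have hxy : (s i)^2 ≤ (s i0)^2 := by
    have := hmax i
    nlinarith [hpos i]
  have hk : (s i0)^2/((s i0)^2+a)^3 ≤ (s i)^2/((s i)^2+a)^3 :=
    aux_key ((s i)^2) ((s i0)^2) a (pow_pos (hpos i) 2) hxy ha0 hcube
  have hterm := mul_nonneg (mul_nonneg ha0.le (sq_nonneg (c i))) (sub_nonneg.2 hk)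
  have heq : 2*a*(s i)^2/((s i)^2+a)^3 * (c i)^2
      + -(2*((c i)^2*(a*(s i0)^2/((s i0)^2+a)^3)))
      = 2*(a*(c i)^2*((s i)^2/((s i)^2+a)^3 - (s i0)^2/((s i0)^2+a)^3)) := by ring
  rw [heq]
  linarith [hterm]
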